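/- arXiv:2007.16144 — 4 statements merged into one kernel-verified Lean document; each statement's English description precedes it below -/
import Mathlib

section
/- Let N > 0, K = [0,N]², and let ℓ with N < ℓ ≤ √2·N. If a (closed) rectangle R with side lengths ℓ and h is contained in K (after any rotation and translation, i.e., R is congruent to [0,ℓ]×[0,h] via an isometry of the plane), then h ≤ √2·N − ℓ. -/
def ksq (N : ℝ) : Set (EuclideanSpace ℝ (Fin 2)) :=
  {p | p 0 ∈ Set.Icc 0 N ∧ p 1 ∈ Set.Icc 0 N}

lemma key_ineq (N l h c s : ℝ) (hN : 0 < N) (hl : N < l) (hl2 : l ≤ Real.sqrt 2 * N)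
    (hh : 0 ≤ h) (hc : 0 ≤ c) (hs : 0 ≤ s) (hcs : c^2 + s^2 = 1)
    (H1 : l*c + h*s ≤ N) (H2 : l*s + h*c ≤ N) : h ≤ Real.sqrt 2 * N - l := by
  have hr2 : Real.sqrt 2 ^ 2 = 2 := Real.sq_sqrt (by norm_num)
  have hr0 : (0:ℝ) ≤ Real.sqrt 2 := Real.sqrt_nonneg 2
  have hr1 : 1 < Real.sqrt 2 := by nlinarith
  set r := Real.sqrt 2 with hr
  wlog hsc : s ≤ c generalizing c s
  · exact this s c hs hc (by linarith) H2 H1 (le_of_not_ge hsc)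
  have hc1 : c ≤ 1 := by nlinarith
  have hc2 : 1 ≤ 2 * c^2 := by nlinarith
  have hrc : 1 ≤ r * c := by nlinarith
  have hrs : r * s ≤ 1 := by nlinarith
  have hspos : 0 < s := by
    rcases hs.lt_or_eq with h' | h'
    · exact h'
    · exfalso
      have hc' : c = 1 := by nlinarith
      nlinarith
  set m := r * N - l with hm
  have hm0 : 0 ≤ m := by linarith
  have hl0 : 0 < l := hN.trans hl
  have step1 : m * (1 + r*c) ≤ l * (1 + r*s) := by
    nlinarith [mul_nonneg (mul_nonneg hr0 hm0) (sub_nonneg.2 hc1),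
      mul_nonneg (mul_nonneg hr0 hl0.le) hs]
  have step2 : m * (1 - r*s) ≤ l * (r*c - 1) := by
    have id1 : l * (r*c - 1) * (1 + r*c) = l * (1 + r*s) * (1 - r*s) := by
      linear_combination (l*c^2 + l*s^2) * hr2 + 2*l*hcs
    have e1 : m * (1 - r*s) * (1 + r*c) ≤ l * (r*c - 1) * (1 + r*c) := by
      rw [id1]
      nlinarith [mul_le_mul_of_nonneg_right step1 (sub_nonneg.2 hrs)]
    have hpos : 0 < 1 + r*c := by linarith
    exact le_of_mul_le_mul_right (by linarith [e1]) hpos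
  have step3 : N ≤ l*c + m*s := by nlinarith
  have h4 : h * s ≤ m * s := by linarith
  have := le_of_mul_le_mul_right (by linarith [h4] : h * s ≤ m * s) hspos
  linarith

/-- if a rectangle with side lengths ℓ and h (with N < ℓ ≤ √2·N)
fits into K = [0,N]² after an isometric placement, then h ≤ √2·N − ℓ. -/
theorem stmt1 (N ℓ h : ℝ) (hN : 0 < N) (hℓ1 : N < ℓ) (hℓ2 : ℓ ≤ Real.sqrt 2 * N)
    (hh : 0 ≤ h)
    (f : EuclideanSpace ℝ (Fin 2) ≃ᵢ EuclideanSpace ℝ (Fin 2))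
    (hfit : f '' {p | p 0 ∈ Set.Icc 0 ℓ ∧ p 1 ∈ Set.Icc 0 h} ⊆ ksq N) :
    h ≤ Real.sqrt 2 * N - ℓ := by
  have hℓ0 : (0:ℝ) ≤ ℓ := (hN.trans hℓ1).le
  set L := f.toRealLinearIsometryEquiv with hLdef
  set e0 : EuclideanSpace ℝ (Fin 2) := !₂[1, 0] with he0
  set e1 : EuclideanSpace ℝ (Fin 2) := !₂[0, 1] with he1
  set u := L e0 with hu
  set v := L e1 with hv
  set a := f 0 with ha
  have corner : ∀ x y : ℝ, x ∈ Set.Icc 0 ℓ → y ∈ Set.Icc (0:ℝ) h → ∀ i : Fin 2,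
      x * u i + y * v i + a i ∈ Set.Icc 0 N := by
    intro x y hx hy i
    have hdec : (!₂[x, y] : EuclideanSpace ℝ (Fin 2)) = x • e0 + y • e1 := by
      ext j
      fin_cases j <;> simp [he0, he1]
    have hmem := hfit ⟨!₂[x, y], ⟨by simpa using hx, by simpa using hy⟩, rfl⟩
    have hfp : f !₂[x, y] = x • u + y • v + a := by
      have h1 := f.toRealLinearIsometryEquiv_apply !₂[x, y]
      rw [← hLdef, hdec, map_add, map_smul, map_smul] at h1
      rw [hdec]
      have h2 := eq_sub_iff_add_eq.mp h1
      exact h2.symm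
    rw [hfp] at hmem
    have happ : (x • u + y • v + a) i = x * u i + y * v i + a i := rfl
    fin_cases i
    · rw [← happ]; exact hmem.1
    · rw [← happ]; exact hmem.2
  have hnu : (u 0)^2 + (u 1)^2 = 1 := by
    have h2 : (inner ℝ u u : ℝ) = (inner ℝ e0 e0 : ℝ) := L.inner_map_map e0 e0
    simp only [PiLp.inner_apply, RCLike.inner_apply, starRingEnd_apply, star_trivial,
      Fin.sum_univ_two] at h2
    rw [he0] at h2
    norm_num at h2
    rw [sq, sq]
    exact h2
  have hnv : (v 0)^2 + (v 1)^2 = 1 := by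
    have h2 : (inner ℝ v v : ℝ) = (inner ℝ e1 e1 : ℝ) := L.inner_map_map e1 e1
    simp only [PiLp.inner_apply, RCLike.inner_apply, starRingEnd_apply, star_trivial,
      Fin.sum_univ_two] at h2
    rw [he1] at h2
    norm_num at h2
    rw [sq, sq]
    exact h2
  have huv : u 0 * v 0 + u 1 * v 1 = 0 := by
    have h2 : (inner ℝ u v : ℝ) = (inner ℝ e0 e1 : ℝ) := L.inner_map_map e0 e1
    simp only [PiLp.inner_apply, RCLike.inner_apply, starRingEnd_apply, star_trivial,
      Fin.sum_univ_two] at h2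
    rw [he0, he1] at h2
    norm_num at h2
    linarith [h2, mul_comm (u 0) (v 0), mul_comm (u 1) (v 1)]
  -- projection-width constraints
  have Hproj : ∀ i : Fin 2, ℓ * |u i| + h * |v i| ≤ N := by
    intro i
    have hA := corner 0 0 (Set.mem_Icc.2 ⟨le_refl 0, hℓ0⟩) (Set.mem_Icc.2 ⟨le_refl 0, hh⟩) i
    have hB := corner ℓ 0 (Set.mem_Icc.2 ⟨hℓ0, le_refl ℓ⟩) (Set.mem_Icc.2 ⟨le_refl 0, hh⟩) i
    have hC := corner 0 h (Set.mem_Icc.2 ⟨le_refl 0, hℓ0⟩) (Set.mem_Icc.2 ⟨hh, le_refl h⟩) i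
    have hD := corner ℓ h (Set.mem_Icc.2 ⟨hℓ0, le_refl ℓ⟩) (Set.mem_Icc.2 ⟨hh, le_refl h⟩) i
    rw [Set.mem_Icc] at hA hB hC hD
    obtain ⟨hA1, hA2⟩ := hA; obtain ⟨hB1, hB2⟩ := hB
    obtain ⟨hC1, hC2⟩ := hC; obtain ⟨hD1, hD2⟩ := hD
    rcases abs_cases (u i) with ⟨e1', _⟩ | ⟨e1', _⟩ <;>
        rcases abs_cases (v i) with ⟨e2', _⟩ | ⟨e2', _⟩ <;> rw [e1', e2']
    · linarith
    · linarith
    · linarith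
    · linarith
  -- |v 0| = |u 1| and |v 1| = |u 0|
  have hsq0 : (v 0)^2 = (u 1)^2 := by
    linear_combination (-(v 0)^2) * hnu + (u 1)^2 * hnv + (u 0 * v 0 - u 1 * v 1) * huv
  have hsq1 : (v 1)^2 = (u 0)^2 := by
    linear_combination (-(v 1)^2) * hnu + (u 0)^2 * hnv + (u 1 * v 1 - u 0 * v 0) * huv
  have habs0 : |v 0| = |u 1| := by
    rw [← Real.sqrt_sq_eq_abs, ← Real.sqrt_sq_eq_abs, hsq0]
  have habs1 : |v 1| = |u 0| := by
    rw [← Real.sqrt_sq_eq_abs, ← Real.sqrt_sq_eq_abs, hsq1]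
  have H1 : ℓ * |u 0| + h * |u 1| ≤ N := by
    have := Hproj 0; rwa [habs0] at this
  have H2 : ℓ * |u 1| + h * |u 0| ≤ N := by
    have := Hproj 1; rwa [habs1] at this
  exact key_ineq N ℓ h (|u 0|) (|u 1|) hN hℓ1 hℓ2 hh (abs_nonneg _) (abs_nonneg _)
    (by rw [sq_abs, sq_abs]; exact hnu) H1 H2
end

section
/- Let N > 0 and let P ⊆ [0,N]² be a convex body whose diameter ℓ satisfies ℓ > √(N² + (N−r)²) where r = N − √(ℓ² − N²) and ℓ > N. Then any two points p, q of P realizing the diameter (|p−q| = ℓ) satisfy: p and q each lie within one of the four corner triangles of leg r of the square; moreover they lie in diagonally opposite corner triangles. -/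
noncomputable def pt (x y : ℝ) : EuclideanSpace ℝ (Fin 2) :=
  (WithLp.equiv 2 (Fin 2 → ℝ)).symm ![x, y]

/-- The corner triangle of leg r at the corner c of the square, where
`ex`/`ey` are the unit directions pointing into the square from c. -/
noncomputable def cornerTri (c : EuclideanSpace ℝ (Fin 2)) (ex ey : EuclideanSpace ℝ (Fin 2))
    (r : ℝ) : Set (EuclideanSpace ℝ (Fin 2)) :=
  convexHull ℝ {c, c + r • ex, c + r • ey}

@[simp] lemma pt_apply_zero (x y : ℝ) : pt x y 0 = x := rfl
@[simp] lemma pt_apply_one (x y : ℝ) : pt x y 1 = y := rfl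

lemma half_aux (N c x y u v : ℝ) (hc : 0 ≤ c) (hcN : c ≤ N)
    (hx : 0 ≤ x) (hy : 0 ≤ y) (hu : u ≤ N) (hv : v ≤ N)
    (hxu : x ≤ u) (hyv : y ≤ v)
    (hd : (x - u)^2 + (y - v)^2 = N^2 + c^2) : x + y ≤ N - c := by
  have hdx : c ≤ u - x := by nlinarith [sq_nonneg (v - y), sq_nonneg (u - x)]
  have hac : c ≤ N - x := by linarith
  have hb0 : (0:ℝ) ≤ N - y := by linarith
  have h1 : N^2 + c^2 - (N-x)^2 ≤ (N-y)^2 := by nlinarith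
  have key : 0 ≤ ((N-x)^2 - c^2) * (N^2 - (N-x)^2) :=
    mul_nonneg (by nlinarith) (by nlinarith)
  have h2 : (N*c)^2 ≤ ((N-x)*(N-y))^2 := by
    nlinarith [mul_le_mul_of_nonneg_left h1 (sq_nonneg (N-x))]
  have hab : N*c ≤ (N-x)*(N-y) :=
    le_of_pow_le_pow_left₀ two_ne_zero (mul_nonneg (by linarith) hb0) h2
  nlinarith [sq_nonneg (N - x + (N - y) - (N + c))]

lemma mem_tri (c ex ey : EuclideanSpace ℝ (Fin 2)) (r x y : ℝ)
    (hx : 0 ≤ x) (hy : 0 ≤ y) (hxy : x + y ≤ r) :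
    c + x • ex + y • ey ∈ cornerTri c ex ey r := by
  rcases eq_or_lt_of_le ((add_nonneg hx hy).trans hxy) with hr | hr
  · have hx0 : x = 0 := by linarith
    have hy0 : y = 0 := by linarith
    subst hx0 hy0
    simp only [zero_smul, add_zero]
    exact subset_convexHull ℝ _ (by left; rfl)
  · have h := (convex_convexHull ℝ ({c, c + r • ex, c + r • ey} : Set _)).sum_mem
      (t := (Finset.univ : Finset (Fin 3))) (w := ![1 - (x+y)/r, x/r, y/r])
      (z := ![c, c + r • ex, c + r • ey]) ?_ ?_ ?_
    · convert h using 1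
      · rfl
      simp only [Fin.sum_univ_three, Matrix.cons_val_zero, Matrix.cons_val_one, Matrix.head_cons,
        Matrix.cons_val_two, Matrix.tail_cons, smul_add, smul_smul]
      match_scalars <;> field_simp <;> ring
    · intro i _
      fin_cases i <;> simp
      · rw [div_le_one hr]; exact hxy
      · positivity
      · positivity
    · simp [Fin.sum_univ_three]; field_simp; ring
    · intro i _
      fin_cases i <;> exact subset_convexHull ℝ _ (by simp)

/-- two points of [0,N]² at distance ℓ with N < ℓ ≤ √2·N lie in
diagonally opposite corner triangles of leg r = N − √(ℓ² − N²). -/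
theorem stmt6 (N ℓ r : ℝ) (hN : 0 < N) (hℓ1 : N < ℓ) (hℓ2 : ℓ ≤ Real.sqrt 2 * N)
    (hr : r = N - Real.sqrt (ℓ ^ 2 - N ^ 2))
    (p q : EuclideanSpace ℝ (Fin 2)) (hp : p ∈ ksq N) (hq : q ∈ ksq N)
    (hdist : dist p q = ℓ) :
    (p ∈ cornerTri (pt 0 0) (pt 1 0) (pt 0 1) r ∧
       q ∈ cornerTri (pt N N) (pt (-1) 0) (pt 0 (-1)) r) ∨
    (p ∈ cornerTri (pt N N) (pt (-1) 0) (pt 0 (-1)) r ∧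
       q ∈ cornerTri (pt 0 0) (pt 1 0) (pt 0 1) r) ∨
    (p ∈ cornerTri (pt 0 N) (pt 1 0) (pt 0 (-1)) r ∧
       q ∈ cornerTri (pt N 0) (pt (-1) 0) (pt 0 1) r) ∨
    (p ∈ cornerTri (pt N 0) (pt (-1) 0) (pt 0 1) r ∧
       q ∈ cornerTri (pt 0 N) (pt 1 0) (pt 0 (-1)) r) := by
  obtain ⟨⟨hp0l, hp0u⟩, hp1l, hp1u⟩ := hp
  obtain ⟨⟨hq0l, hq0u⟩, hq1l, hq1u⟩ := hq
  set c := Real.sqrt (ℓ ^ 2 - N ^ 2) with hcdef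
  have hc0 : 0 ≤ c := Real.sqrt_nonneg _
  have hℓ0 : (0:ℝ) ≤ ℓ := by linarith
  have hc2 : c ^ 2 = ℓ ^ 2 - N ^ 2 := Real.sq_sqrt (by nlinarith)
  have h2 : ℓ ^ 2 ≤ 2 * N ^ 2 := by
    have h := Real.sq_sqrt (by norm_num : (0:ℝ) ≤ 2)
    nlinarith [Real.sqrt_nonneg (2:ℝ)]
  have hcN : c ≤ N := by nlinarith
  have hd : (p 0 - q 0) ^ 2 + (p 1 - q 1) ^ 2 = N ^ 2 + c ^ 2 := by
    rw [EuclideanSpace.dist_eq] at hdist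
    have hsum : (∑ i, dist (p i) (q i) ^ 2) = ℓ ^ 2 := by
      rw [← hdist, Real.sq_sqrt (Finset.sum_nonneg fun i _ => sq_nonneg _)]
    rw [Fin.sum_univ_two, Real.dist_eq, Real.dist_eq, sq_abs, sq_abs] at hsum
    rw [hsum, hc2]; ring
  rcases le_total (p 0) (q 0) with h01 | h01 <;> rcases le_total (p 1) (q 1) with h02 | h02
  · -- p near (0,0), q near (N,N)
    left
    have hP : p 0 + p 1 ≤ N - c :=
      half_aux N c (p 0) (p 1) (q 0) (q 1) hc0 hcN hp0l hp1l hq0u hq1u h01 h02 hd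
    have hQ : (N - q 0) + (N - q 1) ≤ N - c :=
      half_aux N c (N - q 0) (N - q 1) (N - p 0) (N - p 1) hc0 hcN (by linarith) (by linarith)
        (by linarith) (by linarith) (by linarith) (by linarith) (by linear_combination hd)
    constructor
    · have hpe : p = pt 0 0 + (p 0) • pt 1 0 + (p 1) • pt 0 1 := by
        ext i; fin_cases i <;> simp [PiLp.add_apply, PiLp.smul_apply]
      rw [hpe]; exact mem_tri _ _ _ _ _ _ hp0l hp1l (by rw [hr]; linarith)
    · have hqe : q = pt N N + (N - q 0) • pt (-1) 0 + (N - q 1) • pt 0 (-1) := by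
        ext i; fin_cases i <;> simp [PiLp.add_apply, PiLp.smul_apply] <;> ring
      rw [hqe]; exact mem_tri _ _ _ _ _ _ (by linarith) (by linarith) (by rw [hr]; linarith)
  · -- p near (0,N), q near (N,0)
    right; right; left
    have hP : p 0 + (N - p 1) ≤ N - c :=
      half_aux N c (p 0) (N - p 1) (q 0) (N - q 1) hc0 hcN hp0l (by linarith) hq0u
        (by linarith) h01 (by linarith) (by linear_combination hd)
    have hQ : (N - q 0) + q 1 ≤ N - c :=
      half_aux N c (N - q 0) (q 1) (N - p 0) (p 1) hc0 hcN (by linarith) hq1l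
        (by linarith) hp1u (by linarith) h02 (by linear_combination hd)
    constructor
    · have hpe : p = pt 0 N + (p 0) • pt 1 0 + (N - p 1) • pt 0 (-1) := by
        ext i; fin_cases i <;> simp [PiLp.add_apply, PiLp.smul_apply] <;> ring
      rw [hpe]; exact mem_tri _ _ _ _ _ _ hp0l (by linarith) (by rw [hr]; linarith)
    · have hqe : q = pt N 0 + (N - q 0) • pt (-1) 0 + (q 1) • pt 0 1 := by
        ext i; fin_cases i <;> simp [PiLp.add_apply, PiLp.smul_apply] <;> ring
      rw [hqe]; exact mem_tri _ _ _ _ _ _ (by linarith) hq1l (by rw [hr]; linarith)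
  · -- p near (N,0), q near (0,N)
    right; right; right
    have hP : (N - p 0) + p 1 ≤ N - c :=
      half_aux N c (N - p 0) (p 1) (N - q 0) (q 1) hc0 hcN (by linarith) hp1l
        (by linarith) hq1u (by linarith) h02 (by linear_combination hd)
    have hQ : q 0 + (N - q 1) ≤ N - c :=
      half_aux N c (q 0) (N - q 1) (p 0) (N - p 1) hc0 hcN hq0l (by linarith) hp0u
        (by linarith) h01 (by linarith) (by linear_combination hd)
    constructor
    · have hpe : p = pt N 0 + (N - p 0) • pt (-1) 0 + (p 1) • pt 0 1 := by
        ext i; fin_cases i <;> simp [PiLp.add_apply, PiLp.smul_apply] <;> ring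
      rw [hpe]; exact mem_tri _ _ _ _ _ _ (by linarith) hp1l (by rw [hr]; linarith)
    · have hqe : q = pt 0 N + (q 0) • pt 1 0 + (N - q 1) • pt 0 (-1) := by
        ext i; fin_cases i <;> simp [PiLp.add_apply, PiLp.smul_apply] <;> ring
      rw [hqe]; exact mem_tri _ _ _ _ _ _ hq0l (by linarith) (by rw [hr]; linarith)
  · -- p near (N,N), q near (0,0)
    right; left
    have hP : (N - p 0) + (N - p 1) ≤ N - c :=
      half_aux N c (N - p 0) (N - p 1) (N - q 0) (N - q 1) hc0 hcN (by linarith) (by linarith)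
        (by linarith) (by linarith) (by linarith) (by linarith) (by linear_combination hd)
    have hQ : q 0 + q 1 ≤ N - c :=
      half_aux N c (q 0) (q 1) (p 0) (p 1) hc0 hcN hq0l hq1l hp0u hp1u h01 h02
        (by linear_combination hd)
    constructor
    · have hpe : p = pt N N + (N - p 0) • pt (-1) 0 + (N - p 1) • pt 0 (-1) := by
        ext i; fin_cases i <;> simp [PiLp.add_apply, PiLp.smul_apply] <;> ring
      rw [hpe]; exact mem_tri _ _ _ _ _ _ (by linarith) (by linarith) (by rw [hr]; linarith)
    · have hqe : q = pt 0 0 + (q 0) • pt 1 0 + (q 1) • pt 0 1 := by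
        ext i; fin_cases i <;> simp [PiLp.add_apply, PiLp.smul_apply]
      rw [hqe]; exact mem_tri _ _ _ _ _ _ hq0l hq1l (by rw [hr]; linarith)
end

section
/- Let T be a triangle with longest side of length ℓ and let θ be the angle at the vertex v adjacent to the two longest sides, with 0 < θ < π/2. Then area(T) ≥ (ℓ²/8)·tan θ. -/
open MeasureTheory EuclideanGeometry Pointwise

/-- The linear map sending `e₀ ↦ u`, `e₁ ↦ w`. -/
noncomputable def stmt8Lmap (u w : EuclideanSpace ℝ (Fin 2)) :
    EuclideanSpace ℝ (Fin 2) →ₗ[ℝ] EuclideanSpace ℝ (Fin 2) where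
  toFun x := x 0 • u + x 1 • w
  map_add' x y := by simp [add_smul]; module
  map_smul' c x := by simp [smul_smul]

/-- A quarter of the absolute cross product is a lower bound for the area of a triangle. -/
theorem stmt8_tri_vol (a b v : EuclideanSpace ℝ (Fin 2)) :
    ENNReal.ofReal (|(a - v) 0 * (b - v) 1 - (a - v) 1 * (b - v) 0| / 4)
      ≤ volume (convexHull ℝ ({a, b, v} : Set (EuclideanSpace ℝ (Fin 2)))) := by
  set u := a - v with hu
  set w := b - v with hw
  set S : Set (EuclideanSpace ℝ (Fin 2)) :=
    {x | x 0 ∈ Set.Icc (0:ℝ) (1/2) ∧ x 1 ∈ Set.Icc (0:ℝ) (1/2)} with hS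
  have hsub : (fun x => v + stmt8Lmap u w x) '' S ⊆ convexHull ℝ ({a, b, v} : Set _) := by
    rintro _ ⟨x, ⟨⟨h00, h01⟩, h10, h11⟩, rfl⟩
    have := Finset.centerMass_mem_convexHull (Finset.univ : Finset (Fin 3))
      (w := ![x 0, x 1, 1 - x 0 - x 1]) (z := ![a, b, v])
      (s := ({a, b, v} : Set (EuclideanSpace ℝ (Fin 2))))
      (by intro i _; fin_cases i <;> simp <;> linarith)
      (by simp [Fin.sum_univ_three])
      (by intro i _; fin_cases i <;> simp)
    convert this using 1
    rw [Finset.centerMass]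
    have hsum : ∑ i : Fin 3, (![x 0, x 1, 1 - x 0 - x 1]) i = 1 := by
      simp [Fin.sum_univ_three]
    rw [hsum, Fin.sum_univ_three]
    simp [stmt8Lmap, hu, hw]
    module
  calc ENNReal.ofReal (|u 0 * w 1 - u 1 * w 0| / 4)
      = volume ((fun x => v + stmt8Lmap u w x) '' S) := by
        rw [show (fun x => v + stmt8Lmap u w x) = ((fun y => v +ᵥ y) ∘ (stmt8Lmap u w)) from rfl,
          Set.image_comp, Set.image_vadd, measure_vadd, Measure.addHaar_image_linearMap]
        have hdet : LinearMap.det (stmt8Lmap u w) = u 0 * w 1 - u 1 * w 0 := by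
          rw [← LinearMap.det_toMatrix (EuclideanSpace.basisFun (Fin 2) ℝ).toBasis,
            Matrix.det_fin_two]
          have hLm : ∀ x, stmt8Lmap u w x = x 0 • u + x 1 • w := fun x => rfl
          simp [LinearMap.toMatrix_apply, hLm, EuclideanSpace.basisFun_repr,
            EuclideanSpace.basisFun_apply, EuclideanSpace.single_apply, LinearMap.coe_mk, AddHom.coe_mk]
          ring
        have hSvol : volume S = ENNReal.ofReal (1/4) := by
          have h := (EuclideanSpace.volume_preserving_symm_measurableEquiv_toLp (Fin 2)).symm
          rw [← h.measure_preimage]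
          · have : (MeasurableEquiv.toLp 2 (Fin 2 → ℝ)).symm.symm ⁻¹' S
                = Set.pi Set.univ (fun _ : Fin 2 => Set.Icc (0:ℝ) (1/2)) := by
              ext x
              simp [hS, Fin.forall_fin_two, Set.mem_pi, Pi.le_def]
              tauto
            rw [this, volume_pi_pi]
            simp [Real.volume_Icc]
            rw [← ENNReal.inv_pow]
            norm_num
          · apply NullMeasurableSet.inter <;>
            · apply MeasurableSet.nullMeasurableSet
              exact measurableSet_Icc.preimage (by measurability)
        rw [hdet, hSvol, ← ENNReal.ofReal_mul (abs_nonneg _), mul_one_div]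
    _ ≤ volume (convexHull ℝ ({a, b, v} : Set _)) := measure_mono hsub

/-- The cross product in 2D equals `sin` of the angle times the product of norms. -/
theorem stmt8_cross (u w : EuclideanSpace ℝ (Fin 2)) :
    Real.sin (InnerProductGeometry.angle u w) * (‖u‖ * ‖w‖) = |u 0 * w 1 - u 1 * w 0| := by
  rw [InnerProductGeometry.sin_angle_mul_norm_mul_norm]
  have h1 : (inner ℝ u w : ℝ) = u 0 * w 0 + u 1 * w 1 := by
    simp [PiLp.inner_apply, Fin.sum_univ_two]
    ring
  have h2 : (inner ℝ u u : ℝ) = u 0 * u 0 + u 1 * u 1 := by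
    simp only [PiLp.inner_apply, Fin.sum_univ_two, RCLike.inner_apply, conj_trivial]
  have h3 : (inner ℝ w w : ℝ) = w 0 * w 0 + w 1 * w 1 := by
    simp only [PiLp.inner_apply, Fin.sum_univ_two, RCLike.inner_apply, conj_trivial]
  rw [h1, h2, h3]
  rw [show (u 0 * u 0 + u 1 * u 1) * (w 0 * w 0 + w 1 * w 1) -
      (u 0 * w 0 + u 1 * w 1) * (u 0 * w 0 + u 1 * w 1)
      = (u 0 * w 1 - u 1 * w 0) ^ 2 by ring]
  exact Real.sqrt_sq_eq_abs _

/-- if T is a triangle whose longest side has length ℓ and θ is the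
(acute) angle at the vertex v adjacent to the two longest sides, then
area(T) ≥ (ℓ²/8)·tan θ. -/
theorem stmt8 (a b v : EuclideanSpace ℝ (Fin 2))
    (hnd : ¬ Collinear ℝ ({a, b, v} : Set (EuclideanSpace ℝ (Fin 2))))
    (hab1 : dist a b ≤ dist v a) (hab2 : dist a b ≤ dist v b)
    (ℓ θ : ℝ) (hℓ : ℓ = max (dist v a) (max (dist v b) (dist a b)))
    (hθ : θ = EuclideanGeometry.angle a v b)
    (hθ0 : 0 < θ) (hθ2 : θ < Real.pi / 2) :
    ENNReal.ofReal (ℓ ^ 2 / 8 * Real.tan θ)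
      ≤ volume (convexHull ℝ ({a, b, v} : Set (EuclideanSpace ℝ (Fin 2)))) := by
  refine le_trans ?_ (stmt8_tri_vol a b v)
  apply ENNReal.ofReal_le_ofReal
  -- notation
  set L := dist v a with hL
  set m := dist v b with hm
  have hL0 : 0 ≤ L := dist_nonneg
  have hm0 : 0 ≤ m := dist_nonneg
  have hd0 : 0 ≤ dist a b := dist_nonneg
  -- trig facts
  have hθpi : θ ≤ Real.pi := hθ ▸ EuclideanGeometry.angle_le_pi a v b
  have hc : 0 < Real.cos θ := Real.cos_pos_of_mem_Ioo ⟨by linarith [Real.pi_pos], hθ2⟩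
  have hs : 0 ≤ Real.sin θ := Real.sin_nonneg_of_nonneg_of_le_pi hθ0.le hθpi
  -- cross product equals L * m * sin θ
  have hang : θ = InnerProductGeometry.angle (a - v) (b - v) := by
    rw [hθ]; rfl
  have hcross : |(a - v) 0 * (b - v) 1 - (a - v) 1 * (b - v) 0|
      = Real.sin θ * (L * m) := by
    rw [← stmt8_cross (a - v) (b - v), ← hang, hL, hm, dist_comm v a, dist_comm v b,
      dist_eq_norm, dist_eq_norm]
  -- law of cosines
  have hlaw : dist a b ^ 2 = L ^ 2 + m ^ 2 - 2 * L * m * Real.cos θ := by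
    have h := EuclideanGeometry.law_cos a v b
    rw [← hθ, dist_comm a v, dist_comm b v] at h
    linear_combination h
  -- the key inequality : ℓ ^ 2 ≤ 2 * L * m * cos θ
  have hℓLm : ℓ = max L m := by
    rw [hℓ, hL, hm]
    rcases le_total (dist v b) (dist a b) with h | h
    · simp [max_eq_right (le_trans h hab2), le_antisymm h hab2]
    · simp [max_eq_left h]
  have hkey : ℓ ^ 2 ≤ 2 * L * m * Real.cos θ := by
    rcases le_total m L with h | h
    · rw [hℓLm, max_eq_left h]
      have h1 : dist a b ^ 2 ≤ m ^ 2 := by nlinarith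
      nlinarith
    · rw [hℓLm, max_eq_right h]
      have h1 : dist a b ^ 2 ≤ L ^ 2 := by nlinarith
      nlinarith
  -- finish
  rw [hcross, Real.tan_eq_sin_div_cos, div_mul_div_comm,
    div_le_iff₀ (by positivity)]
  nlinarith [mul_nonneg (mul_nonneg (mul_nonneg hs hL0) hm0) hc.le,
    mul_le_mul_of_nonneg_right hkey hs]
end

section
/- Let N, n ∈ ℕ be positive and δ > 0. Suppose P₁, ..., Pₖ (k ≤ n) are pairwise disjoint convex sets in [0,N]². If each Pᵢ is translated to the right by i·(δ/n)·N, the resulting sets P₁', ..., Pₖ' are pairwise disjoint and contained in [0, (1+δ)N] × [0,N], provided that the original family is ordered so that for every horizontal line L meeting both Pᵢ and Pⱼ with i < j, the set L ∩ Pᵢ lies entirely to the left of L ∩ Pⱼ. -/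
lemma ptc0 : pt 1 0 0 = 1 := by simp [pt, WithLp.equiv_symm_apply, PiLp.toLp_apply]
lemma ptc1 : pt 1 0 1 = 0 := by simp [pt, WithLp.equiv_symm_apply, PiLp.toLp_apply]

lemma addc0 (x : EuclideanSpace ℝ (Fin 2)) (c : ℝ) :
    (x + c • pt 1 0) 0 = x 0 + c := by
  simp [pt, WithLp.equiv_symm_apply, PiLp.toLp_apply]

lemma addc1 (x : EuclideanSpace ℝ (Fin 2)) (c : ℝ) :
    (x + c • pt 1 0) 1 = x 1 := by
  simp [pt, WithLp.equiv_symm_apply, PiLp.toLp_apply]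

/-- translating the i-th of k ≤ n pairwise disjoint convex sets in
[0,N]², ordered left to right, to the right by i·(δ/n)·N keeps them pairwise
disjoint and inside [0,(1+δ)N] × [0,N]. -/
theorem stmt16 (N δ : ℝ) (n k : ℕ) (hN : 0 < N) (hδ : 0 < δ) (hn : 0 < n)
    (hk : k ≤ n) (P : Fin k → Set (EuclideanSpace ℝ (Fin 2)))
    (hconv : ∀ i, Convex ℝ (P i))
    (hsub : ∀ i, P i ⊆ ksq N)
    (hdisj : ∀ i j, i ≠ j → Disjoint (P i) (P j))
    (horder : ∀ i j : Fin k, i < j → ∀ p ∈ P i, ∀ q ∈ P j, p 1 = q 1 → p 0 ≤ q 0)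
    (Q : Fin k → Set (EuclideanSpace ℝ (Fin 2)))
    (hQ : Q = fun i : Fin k =>
      (fun p => p + (((i.val : ℝ) + 1) * (δ / n) * N) • pt 1 0) '' P i) :
    (∀ i j, i ≠ j → Disjoint (Q i) (Q j)) ∧
    (∀ i, Q i ⊆ {p : EuclideanSpace ℝ (Fin 2) |
        p 0 ∈ Set.Icc 0 ((1 + δ) * N) ∧ p 1 ∈ Set.Icc 0 N}) := by
  have hdn : 0 < δ / n * N := by positivity
  -- key: for i < j, translated sets are disjoint
  have key : ∀ i j : Fin k, i < j → Disjoint (Q i) (Q j) := by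
    intro i j hij
    rw [Set.disjoint_left]
    rintro z hzi hzj
    rw [hQ] at hzi hzj
    obtain ⟨p, hp, hpz⟩ := hzi
    obtain ⟨q, hq, hqz⟩ := hzj
    have h0 : p 0 + ((i.val : ℝ) + 1) * (δ / n) * N
        = q 0 + ((j.val : ℝ) + 1) * (δ / n) * N := by
      have := congrArg (fun z : EuclideanSpace ℝ (Fin 2) => z 0) (hpz.trans hqz.symm)
      simpa [ptc0] using this
    have h1 : p 1 = q 1 := by
      have := congrArg (fun z : EuclideanSpace ℝ (Fin 2) => z 1) (hpz.trans hqz.symm)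
      simpa [ptc1] using this
    have hpq : p 0 ≤ q 0 := horder i j hij p hp q hq h1
    have hij' : ((i.val : ℝ) + 1) * (δ / n) * N < ((j.val : ℝ) + 1) * (δ / n) * N := by
      have : (i.val : ℝ) + 1 < (j.val : ℝ) + 1 := by
        have := (Fin.lt_iff_val_lt_val.mp hij)
        exact_mod_cast by linarith [Nat.cast_lt (α := ℝ) |>.mpr this]
      nlinarith
    linarith
  constructor
  · intro i j hij
    rcases lt_or_gt_of_ne hij with h | h
    · exact key i j h
    · exact (key j i h).symm
  · intro i
    rw [hQ]
    rintro z ⟨p, hp, rfl⟩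
    obtain ⟨⟨hx0, hx1⟩, hy⟩ := hsub i hp
    have hcpos : 0 < ((i.val : ℝ) + 1) * (δ / n) * N := by positivity
    have hcle : ((i.val : ℝ) + 1) * (δ / n) * N ≤ δ * N := by
      have h1 : (i.val : ℝ) + 1 ≤ (n : ℝ) := by
        have : i.val + 1 ≤ n := le_trans i.isLt hk
        exact_mod_cast this
      have hn' : (0 : ℝ) < n := by exact_mod_cast hn
      calc ((i.val : ℝ) + 1) * (δ / n) * N ≤ (n : ℝ) * (δ / n) * N := by
            have : (0 : ℝ) ≤ δ / n * N := le_of_lt hdn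
            nlinarith
        _ = δ * N := by field_simp
    dsimp only
    refine ⟨⟨?_, ?_⟩, ?_⟩
    · rw [addc0]; linarith
    · rw [addc0]; nlinarith
    · rw [addc1]; exact hy
end
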